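/- Let G = (V, E) be a finite simple graph with a sign ξ(e) ∈ {−1,+1} on each edge e ∈ E. Let A be the signed adjacency matrix (A[u,v] = ξ({u,v}) if {u,v} ∈ E, else 0), D the diagonal degree matrix, L(u) = (1−u²)·I_{|V|} + u²·D − u·A the deformed Laplacian, and B the signed non-backtracking matrix of G (a 2|E| × 2|E| matrix). Then for every real u: det(I_{2|E|} − u·B) · (1 − u²)^{|V|} = det(L(u)) · (1 − u²)^{|E|}. (Equivalently, for u ≠ ±1, det(I − uB) = det(L(u)) · (1−u²)^{|E|−|V|}.) -/

import Mathlib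

open scoped Matrix
open Finset

private lemma ihara_F2  (V : Type) [Fintype V] [DecidableEq V]
    (G : SimpleGraph V) [DecidableRel G.Adj]
    (ξ : V → V → ℝ)
    (A : Matrix V V ℝ) (hA : A = fun x y => if G.Adj x y then ξ x y else 0)
    (σ' : Matrix V G.Dart ℝ) (hσ : σ' = fun (v : V) (e : G.Dart) => if e.fst = v then (1:ℝ) else 0)
    (τ' : Matrix V G.Dart ℝ) (hτ : τ' = fun (v : V) (e : G.Dart) => if e.snd = v then ξ e.fst e.snd else 0) :
    σ' * τ'ᵀ = A := by
  classical
  subst hσ hτ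
  ext v w
  rw [hA]; erw [Matrix.mul_apply]
  unfold Matrix.transpose; simp only [Matrix.of_apply]
  by_cases h : G.Adj v w
  · rw [Finset.sum_eq_single (⟨(v, w), h⟩ : G.Dart)]
    · simp [h]
    · intro e _ hne
      by_cases h1 : e.fst = v
      · by_cases h2 : e.snd = w
        · exact absurd (SimpleGraph.Dart.ext _ _ (Prod.ext h1 h2)) hne
        · simp [h2]
      · simp [h1]
    · simp
  · rw [show (if G.Adj v w then ξ v w else 0) = 0 by simp [h]]
    apply Finset.sum_eq_zero
    intro e _
    by_cases h1 : e.fst = v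
    · by_cases h2 : e.snd = w
      · exact absurd (h1 ▸ h2 ▸ e.adj) h
      · simp [h2]
    · simp [h1]

private lemma ihara_F3  (V : Type) [Fintype V] [DecidableEq V]
    (G : SimpleGraph V) [DecidableRel G.Adj]
    (ξ : V → V → ℝ)
    (hξ2 : ∀ e : G.Dart, ξ e.fst e.snd * ξ e.fst e.snd = 1)
    (D : Matrix V V ℝ) (hD : D = Matrix.diagonal fun v => (G.degree v : ℝ))
    (τ' : Matrix V G.Dart ℝ)
    (hτ : τ' = fun (v : V) (e : G.Dart) => if e.snd = v then ξ e.fst e.snd else 0) :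
    τ' * τ'ᵀ = D := by
  classical
  subst hτ hD
  ext v w
  erw [Matrix.mul_apply]
  unfold Matrix.transpose; simp only [Matrix.of_apply]
  by_cases hvw : v = w
  · subst hvw
    rw [Matrix.diagonal_apply_eq]
    have h1 : ∀ e : G.Dart,
        (if e.snd = v then ξ e.fst e.snd else 0) * (if e.snd = v then ξ e.fst e.snd else 0)
          = if e.snd = v then (1:ℝ) else 0 := by
      intro e
      by_cases h : e.snd = v
      · rw [if_pos h, if_pos h]; exact hξ2 e
      · simp [h]
    rw [Finset.sum_congr rfl fun e _ => h1 e, Finset.sum_boole]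
    -- now: #{e | e.snd = v} = degree
    have hcard : #({d : G.Dart | d.snd = v} : Finset _) = G.degree v := by
      rw [← G.dart_fst_fiber_card_eq_degree v]
      apply Finset.card_bij (fun d _ => SimpleGraph.Dart.symm d)
      · intro a ha
        simp only [Finset.mem_filter, Finset.mem_univ, true_and] at ha ⊢
        simpa using ha
      · intro a ha b hb hab
        have := congrArg SimpleGraph.Dart.symm hab
        simpa using this
      · intro b hb
        refine ⟨b.symm, ?_, by simp⟩
        simp only [Finset.mem_filter, Finset.mem_univ, true_and] at hb ⊢
        simpa using hb
    rw [← hcard]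
  · rw [Matrix.diagonal_apply_ne _ hvw]
    apply Finset.sum_eq_zero
    intro e _
    by_cases h1 : e.snd = v
    · have h2 : ¬ e.snd = w := fun h => hvw (h1 ▸ h ▸ rfl)
      simp [h2]
    · simp [h1]

private lemma ihara_F456  (V : Type) [Fintype V] [DecidableEq V]
    (G : SimpleGraph V) [DecidableRel G.Adj]
    (ξ : V → V → ℝ)
    (hξ2 : ∀ e : G.Dart, ξ e.fst e.snd * ξ e.fst e.snd = 1)
    (hξs : ∀ e : G.Dart, ξ e.snd e.fst = ξ e.fst e.snd)
    (σ' : Matrix V G.Dart ℝ) (hσ : σ' = fun (v : V) (e : G.Dart) => if e.fst = v then (1:ℝ) else 0)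
    (τ' : Matrix V G.Dart ℝ)
    (hτ : τ' = fun (v : V) (e : G.Dart) => if e.snd = v then ξ e.fst e.snd else 0)
    (K : Matrix G.Dart G.Dart ℝ)
    (hK : K = fun e f => if f = e.symm then ξ e.fst e.snd else 0)
    (B : Matrix G.Dart G.Dart ℝ)
    (hB : B = fun e f => if e.snd = f.fst ∧ e.fst ≠ f.snd then ξ e.fst e.snd else 0) :
    B = τ'ᵀ * σ' - K ∧ σ' * K = τ' ∧ K * K = 1 := by
  classical
  subst hσ hτ hK hB
  refine ⟨?_, ?_, ?_⟩
  · ext e f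
    erw [Matrix.sub_apply, Matrix.mul_apply]
    unfold Matrix.transpose; simp only [Matrix.of_apply]
    have hsum : ∑ v, (if e.snd = v then ξ e.fst e.snd else 0) * (if f.fst = v then (1:ℝ) else 0)
        = if f.fst = e.snd then ξ e.fst e.snd else 0 := by
      rw [Finset.sum_eq_single e.snd]
      · simp
      · intro v _ hv
        rw [if_neg (fun h => hv h.symm), zero_mul]
      · simp
    rw [hsum]
    by_cases h1 : e.snd = f.fst
    · by_cases h2 : e.fst = f.snd
      · have hf : f = e.symm := by
          apply SimpleGraph.Dart.ext
          exact Prod.ext h1.symm h2.symm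
        rw [if_neg (by rintro ⟨-, hne⟩; exact hne h2), if_pos h1.symm, if_pos hf, sub_self]
      · have hf : ¬ f = e.symm := by
          intro hf
          apply h2
          rw [hf]
          rfl
        rw [if_pos ⟨h1, h2⟩, if_pos h1.symm, if_neg hf, sub_zero]
    · have hf : ¬ f = e.symm := by
        intro hf; apply h1; rw [hf]; rfl
      rw [if_neg (by rintro ⟨hh, -⟩; exact h1 hh),
        if_neg (fun h : f.fst = e.snd => h1 h.symm), if_neg hf, sub_zero]
  · ext v f
    erw [Matrix.mul_apply]
    rw [Finset.sum_eq_single f.symm]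
    · simp only [SimpleGraph.Dart.symm_symm, eq_self_iff_true, if_true, SimpleGraph.Dart.symm_toProd,
        Prod.fst_swap, Prod.snd_swap, hξs f]
      by_cases h : f.snd = v
      · rw [if_pos h, if_pos h, one_mul]
      · rw [if_neg h, if_neg h, zero_mul]
    · intro e _ he
      have hne : ¬ f = e.symm := fun h => he (by rw [h, SimpleGraph.Dart.symm_symm])
      rw [if_neg hne, mul_zero]
    · simp
  · ext e f
    erw [Matrix.mul_apply]
    rw [Finset.sum_eq_single e.symm]
    · rw [if_pos rfl]
      by_cases h : f = e
      · have : f = e.symm.symm := by simp [h]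
        rw [if_pos this]
        have : ξ e.symm.fst e.symm.snd = ξ e.fst e.snd := hξs e
        rw [this, hξ2 e, h, Matrix.one_apply_eq]
      · have : ¬ f = e.symm.symm := by simpa using h
        rw [if_neg this, mul_zero, Matrix.one_apply_ne fun hh => h hh.symm]
    · intro g _ hg
      rw [if_neg (fun h : g = e.symm => hg h), zero_mul]
    · simp

private lemma ihara_e1  (V : Type) [Fintype V] [DecidableEq V] (Dt : Type) [Fintype Dt] [DecidableEq Dt]
    (u : ℝ) (σ' τ' : Matrix V Dt ℝ) (K B : Matrix Dt Dt ℝ)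
    (F4 : B = τ'ᵀ * σ' - K) (F5 : σ' * K = τ') (F6 : K * K = 1) :
    (1 - u • B) * (1 - u • K)
      = (1 - u ^ 2) • (1 : Matrix Dt Dt ℝ) - u • (τ'ᵀ * (σ' - u • τ')) := by
  subst F4
  have h1 : τ'ᵀ * σ' * K = τ'ᵀ * τ' := by rw [Matrix.mul_assoc, F5]
  simp only [Matrix.mul_sub, Matrix.sub_mul, Matrix.one_mul, Matrix.mul_one,
    Matrix.smul_mul, Matrix.mul_smul, smul_smul, h1, F6, smul_sub, sub_smul, one_smul]
  ring_nf
  module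

private lemma ihara_e2  (V : Type) [Fintype V] [DecidableEq V] (Dt : Type) [Fintype Dt] [DecidableEq Dt]
    (u c : ℝ) (hc : c = 1 - u ^ 2) (hu : c ≠ 0)
    (σ' τ' : Matrix V Dt ℝ) (A D : Matrix V V ℝ)
    (F2 : σ' * τ'ᵀ = A) (F3 : τ' * τ'ᵀ = D) :
    (c • (1 : Matrix Dt Dt ℝ) - u • (τ'ᵀ * (σ' - u • τ'))).det
      = c ^ Fintype.card Dt * (c⁻¹) ^ Fintype.card V
        * ((1 - u ^ 2) • (1 : Matrix V V ℝ) + u ^ 2 • D - u • A).det := by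
  have h1 : c • (1 : Matrix Dt Dt ℝ) - u • (τ'ᵀ * (σ' - u • τ'))
      = c • ((1 : Matrix Dt Dt ℝ) - ((u / c) • τ'ᵀ) * (σ' - u • τ')) := by
    rw [smul_sub, Matrix.smul_mul, smul_smul, mul_div_cancel₀ _ hu]
  have h2 : (1 : Matrix V V ℝ) - (σ' - u • τ') * ((u / c) • τ'ᵀ)
      = c⁻¹ • ((1 - u ^ 2) • (1 : Matrix V V ℝ) + u ^ 2 • D - u • A) := by
    rw [Matrix.mul_smul, Matrix.sub_mul, Matrix.smul_mul, F2, F3]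
    match_scalars <;> field_simp <;> linarith [hc]
  rw [h1, Matrix.det_smul, Matrix.det_one_sub_mul_comm, h2, Matrix.det_smul]
  ring

private lemma ihara_detK  (V : Type) [Fintype V] [DecidableEq V]
    (G : SimpleGraph V) [DecidableRel G.Adj]
    (ξ : V → V → ℝ)
    (hξ2 : ∀ e : G.Dart, ξ e.fst e.snd * ξ e.fst e.snd = 1)
    (hξs : ∀ e : G.Dart, ξ e.snd e.fst = ξ e.fst e.snd)
    (u : ℝ)
    (K : Matrix G.Dart G.Dart ℝ)
    (hK : K = fun e f => if f = e.symm then ξ e.fst e.snd else 0) :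
    (1 - u • K).det = (1 - u ^ 2) ^ G.edgeFinset.card := by
  classical
  letI : LinearOrder V := LinearOrder.lift' (Fintype.equivFin V) (Fintype.equivFin V).injective
  set P := {e : G.Dart // e.fst < e.snd} with hP
  have hpos : ∀ e : G.Dart, ¬ e.fst < e.snd → e.snd < e.fst := by
    intro e h
    exact lt_of_le_of_ne (le_of_not_gt h) e.snd_ne_fst
  let ε : P ⊕ P ≃ G.Dart :=
    { toFun := Sum.elim (fun p => p.1) (fun p => p.1.symm)
      invFun := fun e =>
        if h : e.fst < e.snd then Sum.inl ⟨e, h⟩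
        else Sum.inr ⟨e.symm, hpos e h⟩
      left_inv := by
        rintro (⟨e, h⟩ | ⟨e, h⟩) <;> dsimp only [Sum.elim_inl, Sum.elim_inr]
        · rw [dif_pos h]
        · have h2 : ¬ e.symm.fst < e.symm.snd := by
            simp only [SimpleGraph.Dart.symm_toProd, Prod.fst_swap, Prod.snd_swap]
            exact lt_asymm h
          rw [dif_neg h2]
          exact congrArg Sum.inr (Subtype.ext (by simp))
      right_inv := by
        intro e
        dsimp only
        by_cases h : e.fst < e.snd
        · rw [dif_pos h]
          rfl
        · rw [dif_neg h]
          simp }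
  -- cardinality
  have hcardP : Fintype.card P = G.edgeFinset.card := by
    have h1 : Fintype.card (P ⊕ P) = Fintype.card G.Dart := Fintype.card_congr ε
    rw [Fintype.card_sum, G.dart_card_eq_twice_card_edges] at h1
    omega
  -- submatrix
  have hsub : ((1 : Matrix G.Dart G.Dart ℝ) - u • K).submatrix ε ε
      = Matrix.fromBlocks 1 (-u • Matrix.diagonal (fun p : P => ξ p.1.fst p.1.snd))
          (-u • Matrix.diagonal (fun p : P => ξ p.1.fst p.1.snd)) 1 := by
    have hKapp : ∀ e f, K e f = if f = e.symm then ξ e.fst e.snd else 0 := fun e f => by subst hK; rfl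
    have hl : ∀ p : P, ε (Sum.inl p) = (p.1 : G.Dart) := fun _ => rfl
    have hr : ∀ p : P, ε (Sum.inr p) = (p.1 : G.Dart).symm := fun _ => rfl
    ext i j
    rcases i with p | p <;> rcases j with q | q <;>
      simp only [Matrix.submatrix_apply, Matrix.fromBlocks_apply₁₁, Matrix.fromBlocks_apply₁₂,
        Matrix.fromBlocks_apply₂₁, Matrix.fromBlocks_apply₂₂, Matrix.sub_apply, Matrix.smul_apply,
        smul_eq_mul, hl, hr,
        SimpleGraph.Dart.symm_toProd, Prod.fst_swap, Prod.snd_swap, SimpleGraph.Dart.symm_symm,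
        Matrix.diagonal_apply, Matrix.one_apply, hξs, neg_mul, hKapp]
    · -- inl inl
      have hnq : ¬ (q.1 : G.Dart) = (p.1 : G.Dart).symm := by
        intro hh
        have hq := q.2
        rw [hh] at hq
        simp only [SimpleGraph.Dart.symm_toProd, Prod.fst_swap, Prod.snd_swap] at hq
        exact lt_asymm p.2 hq
      rw [if_neg hnq, mul_zero, sub_zero]
      by_cases h : p = q
      · rw [if_pos (congrArg _ h), if_pos h]
      · rw [if_neg (fun hh => h (Subtype.ext hh)), if_neg h]
    · -- inl inr
      have h1 : ¬ (p.1 : G.Dart) = (q.1 : G.Dart).symm := by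
        intro hh
        have hp := p.2
        rw [hh] at hp
        simp only [SimpleGraph.Dart.symm_toProd, Prod.fst_swap, Prod.snd_swap] at hp
        exact lt_asymm q.2 hp
      rw [if_neg h1]
      by_cases h : p = q
      · subst h
        rw [if_pos rfl, if_pos rfl]
        ring
      · have h2 : ¬ (q.1 : G.Dart).symm = (p.1 : G.Dart).symm := by
          intro hh
          apply h
          apply Subtype.ext
          have := congrArg SimpleGraph.Dart.symm hh
          simpa using this.symm
        rw [if_neg h2, if_neg h]
        ring
    · -- inr inl
      have h1 : ¬ (p.1 : G.Dart).symm = (q.1 : G.Dart) := by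
        intro hh
        have hq := q.2
        rw [← hh] at hq
        simp only [SimpleGraph.Dart.symm_toProd, Prod.fst_swap, Prod.snd_swap] at hq
        exact lt_asymm p.2 hq
      rw [if_neg h1]
      by_cases h : p = q
      · subst h
        rw [if_pos rfl, if_pos rfl]
        ring
      · rw [if_neg (fun hh => h (Subtype.ext hh).symm), if_neg h]
        ring
    · -- inr inr
      have h2 : ¬ (q.1 : G.Dart).symm = (p.1 : G.Dart) := by
        intro hh
        have hp := p.2
        rw [← hh] at hp
        simp only [SimpleGraph.Dart.symm_toProd, Prod.fst_swap, Prod.snd_swap] at hp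
        exact lt_asymm q.2 hp
      rw [if_neg h2, mul_zero, sub_zero]
      by_cases h : p = q
      · rw [if_pos (congrArg (fun r : P => (r.1 : G.Dart).symm) h), if_pos h]
      · have h3 : ¬ (p.1 : G.Dart).symm = (q.1 : G.Dart).symm := by
          intro hh
          apply h
          apply Subtype.ext
          have := congrArg SimpleGraph.Dart.symm hh
          simpa using this
        rw [if_neg h3, if_neg h]
  have hdet : ((1 : Matrix G.Dart G.Dart ℝ) - u • K).det
      = Matrix.det (((1 : Matrix G.Dart G.Dart ℝ) - u • K).submatrix ε ε) :=
    (Matrix.det_submatrix_equiv_self ε _).symm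
  rw [hdet, hsub, Matrix.det_fromBlocks_one₁₁]
  have : (1 : Matrix P P ℝ) - (-u • Matrix.diagonal (fun p : P => ξ p.1.fst p.1.snd)) *
      (-u • Matrix.diagonal (fun p : P => ξ p.1.fst p.1.snd))
      = Matrix.diagonal (fun _ : P => 1 - u ^ 2) := by
    rw [Matrix.smul_mul, Matrix.mul_smul, smul_smul, Matrix.diagonal_mul_diagonal]
    ext p q
    by_cases h : p = q
    · subst h
      simp [hξ2 p.1]
      ring
    · simp [Matrix.one_apply_ne h, Matrix.diagonal_apply_ne _ h, Matrix.diagonal_apply_ne _ h]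
  rw [this, Matrix.det_diagonal, Finset.prod_const, Finset.card_univ, hcardP]

private theorem ihara_aux (V : Type) [Fintype V] [DecidableEq V]
    (G : SimpleGraph V) [DecidableRel G.Adj]
    (ξ : V → V → ℝ) (hsymm : ∀ u v, ξ u v = ξ v u)
    (hsign : ∀ u v, G.Adj u v → ξ u v = 1 ∨ ξ u v = -1)
    (u : ℝ) (hu : 1 - u ^ 2 ≠ 0)
    (A : Matrix V V ℝ) (hA : A = fun x y => if G.Adj x y then ξ x y else 0)
    (D : Matrix V V ℝ) (hD : D = Matrix.diagonal fun v => (G.degree v : ℝ))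
    (B : Matrix G.Dart G.Dart ℝ)
    (hB : B = fun e f => if e.snd = f.fst ∧ e.fst ≠ f.snd then ξ e.fst e.snd else 0) :
    Matrix.det (1 - u • B) * (1 - u ^ 2) ^ Fintype.card V
      = Matrix.det ((1 - u ^ 2) • (1 : Matrix V V ℝ) + u ^ 2 • D - u • A)
          * (1 - u ^ 2) ^ G.edgeFinset.card := by
  classical
  have hξ2 : ∀ e : G.Dart, ξ e.fst e.snd * ξ e.fst e.snd = 1 := by
    intro e
    rcases hsign _ _ e.adj with h | h <;> rw [h] <;> norm_num
  have hξs : ∀ e : G.Dart, ξ e.snd e.fst = ξ e.fst e.snd := fun e => hsymm _ _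
  set σ' : Matrix V G.Dart ℝ := fun v e => if e.fst = v then 1 else 0 with hσ
  set τ' : Matrix V G.Dart ℝ := fun v e => if e.snd = v then ξ e.fst e.snd else 0 with hτ
  set K : Matrix G.Dart G.Dart ℝ := fun e f => if f = e.symm then ξ e.fst e.snd else 0 with hK
  have F2 := ihara_F2 V G ξ A hA σ' hσ τ' hτ
  have F3 := ihara_F3 V G ξ hξ2 D hD τ' hτ
  obtain ⟨F4, F5, F6⟩ := ihara_F456 V G ξ hξ2 hξs σ' hσ τ' hτ K hK B hB
  have e1 := ihara_e1 V G.Dart u σ' τ' K B F4 F5 F6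
  have e2 := ihara_e2 V G.Dart u (1 - u ^ 2) rfl hu σ' τ' A D F2 F3
  have hdetK := ihara_detK V G ξ hξ2 hξs u K hK
  have hm : Fintype.card G.Dart = 2 * G.edgeFinset.card :=
    G.dart_card_eq_twice_card_edges
  have e3 : (1 - u • B).det * (1 - u • K).det
      = (1 - u ^ 2) ^ Fintype.card G.Dart * ((1 - u ^ 2)⁻¹) ^ Fintype.card V
        * ((1 - u ^ 2) • (1 : Matrix V V ℝ) + u ^ 2 • D - u • A).det := by
    rw [← Matrix.det_mul, e1, e2]
  rw [hdetK, hm] at e3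
  apply mul_right_cancel₀ (pow_ne_zero G.edgeFinset.card hu)
  have hinv : ((1 - u ^ 2)⁻¹) ^ Fintype.card V * (1 - u ^ 2) ^ Fintype.card V = 1 := by
    rw [← mul_pow, inv_mul_cancel₀ hu, one_pow]
  calc Matrix.det (1 - u • B) * (1 - u ^ 2) ^ Fintype.card V * (1 - u ^ 2) ^ G.edgeFinset.card
      = (Matrix.det (1 - u • B) * (1 - u ^ 2) ^ G.edgeFinset.card)
          * (1 - u ^ 2) ^ Fintype.card V := by ring
    _ = ((1 - u ^ 2) ^ (2 * G.edgeFinset.card) * ((1 - u ^ 2)⁻¹) ^ Fintype.card V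
          * ((1 - u ^ 2) • (1 : Matrix V V ℝ) + u ^ 2 • D - u • A).det)
          * (1 - u ^ 2) ^ Fintype.card V := by rw [e3]
    _ = (1 - u ^ 2) ^ (2 * G.edgeFinset.card)
          * (((1 - u ^ 2)⁻¹) ^ Fintype.card V * (1 - u ^ 2) ^ Fintype.card V)
          * ((1 - u ^ 2) • (1 : Matrix V V ℝ) + u ^ 2 • D - u • A).det := by ring
    _ = ((1 - u ^ 2) • (1 : Matrix V V ℝ) + u ^ 2 • D - u • A).det
          * (1 - u ^ 2) ^ G.edgeFinset.card * (1 - u ^ 2) ^ G.edgeFinset.card := by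
        rw [hinv, mul_one, two_mul, pow_add]; ring

theorem stmt_4 (V : Type) [Fintype V] [DecidableEq V]
    (G : SimpleGraph V) [DecidableRel G.Adj]
    (ξ : V → V → ℝ) (hsymm : ∀ u v, ξ u v = ξ v u)
    (hsign : ∀ u v, G.Adj u v → ξ u v = 1 ∨ ξ u v = -1)
    (u : ℝ)
    (A : Matrix V V ℝ) (hA : A = fun x y => if G.Adj x y then ξ x y else 0)
    (D : Matrix V V ℝ) (hD : D = Matrix.diagonal fun v => (G.degree v : ℝ))
    (B : Matrix G.Dart G.Dart ℝ)
    (hB : B = fun e f => if e.snd = f.fst ∧ e.fst ≠ f.snd then ξ e.fst e.snd else 0) :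
    Matrix.det (1 - u • B) * (1 - u ^ 2) ^ Fintype.card V
      = Matrix.det ((1 - u ^ 2) • (1 : Matrix V V ℝ) + u ^ 2 • D - u • A)
          * (1 - u ^ 2) ^ G.edgeFinset.card := by
  have hdense : Dense ((Set.univ : Set ℝ) \ ({1, -1} : Finset ℝ)) :=
    dense_univ.diff_finset ({1, -1} : Finset ℝ)
  have hcont1 : Continuous fun w : ℝ =>
      Matrix.det (1 - w • B) * (1 - w ^ 2) ^ Fintype.card V := by
    apply Continuous.mul
    · exact (continuous_const.sub (continuous_id.smul continuous_const)).matrix_det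
    · exact (continuous_const.sub (continuous_pow 2)).pow _
  have hcont2 : Continuous fun w : ℝ =>
      Matrix.det ((1 - w ^ 2) • (1 : Matrix V V ℝ) + w ^ 2 • D - w • A)
        * (1 - w ^ 2) ^ G.edgeFinset.card := by
    apply Continuous.mul
    · apply Continuous.matrix_det
      exact (((continuous_const.sub (continuous_pow 2)).smul continuous_const).add
        ((continuous_pow 2).smul continuous_const)).sub (continuous_id.smul continuous_const)
    · exact (continuous_const.sub (continuous_pow 2)).pow _
  have := Continuous.ext_on hdense hcont1 hcont2 ?_
  · exact congrFun this u
  · intro w hw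
    apply ihara_aux V G ξ hsymm hsign w ?_ A hA D hD B hB
    rcases hw with ⟨-, hw⟩
    simp only [Finset.coe_insert, Finset.coe_singleton, Set.mem_insert_iff,
      Set.mem_singleton_iff, not_or] at hw
    intro h
    have : (1 - w) * (1 + w) = 0 := by ring_nf; linarith [h]
    rcases mul_eq_zero.mp this with h1 | h1
    · exact hw.1 (by linarith)
    · exact hw.2 (by linarith)
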